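/- Let G be a topological group. For each positive integer n, let t_n denote the number of continuous homomorphisms from G to the symmetric group S_n (with the discrete topology), set t_0 = 1, and let s_k denote the number of continuous homomorphisms from G to S_k whose image is a transitive subgroup of S_k; assume all these sets are finite. Then for every positive integer n, t_n = Σ_{k=1}^{n} C(n−1, k−1) · s_k · t_{n−k}, where C(n−1, k−1) is the binomial coefficient. -/

import Mathlib

/-- The number of continuous homomorphisms `G → S_n`, where the symmetric group `S_n`
carries the discrete topology. -/
noncomputable def contHomCount (G : Type*) [Group G] [TopologicalSpace G] (n : ℕ) : ℕ :=
  Nat.card {φ : G →* Equiv.Perm (Fin n) // @Continuous G (Equiv.Perm (Fin n)) _ ⊥ ⇑φ}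

/-- The number of continuous homomorphisms `G → S_n` with transitive image. -/
noncomputable def transContHomCount (G : Type*) [Group G] [TopologicalSpace G] (n : ℕ) : ℕ :=
  Nat.card {φ : G →* Equiv.Perm (Fin n) //
    @Continuous G (Equiv.Perm (Fin n)) _ ⊥ ⇑φ ∧ ∀ a b : Fin n, ∃ g : G, φ g a = b}

open Equiv
section RestCombine
variable {G : Type*} [Group G] {α : Type*} (p : α → Prop) [DecidablePred p]
def restrictHom (φ : G →* Perm α) (h : ∀ g x, p x ↔ p (φ g x)) : G →* Perm {x // p x} where
  toFun g := (φ g).subtypePerm (fun x => (h g x).symm)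
  map_one' := by ext x; simp
  map_mul' a b := by ext x; show φ (a * b) x = φ a (φ b x); rw [map_mul, Perm.mul_apply]
@[simp] lemma restrictHom_apply (φ : G →* Perm α) (h : ∀ g x, p x ↔ p (φ g x)) (g : G)
    (x : {x // p x}) : (restrictHom p φ h g x : α) = φ g x := rfl
end RestCombine

section Fiber
variable {G : Type*} [Group G] [TopologicalSpace G] (n : ℕ) (O : Finset (Fin n))

def permCongrMul {α β : Type*} (e : α ≃ β) : Perm α ≃* Perm β :=
  { e.permCongr with
    map_mul' := fun σ τ => by ext x; simp [Equiv.permCongr_apply, Equiv.Perm.mul_apply] }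

lemma permCongrMul_apply {α β : Type*} (e : α ≃ β) (σ : Perm α) (x : β) :
    permCongrMul e σ x = e (σ (e.symm x)) := rfl

lemma permCongrMul_symm_apply {α β : Type*} (e : α ≃ β) (σ : Perm β) (x : α) :
    (permCongrMul e).symm σ x = e.symm (σ (e x)) := rfl

noncomputable def eC : {x : Fin n // ¬ x ∈ O} ≃ Fin (n - O.card) :=
  Fintype.equivFinOfCardEq (by
    rw [Fintype.card_subtype_compl]
    simp [Fintype.card_coe])

noncomputable def fwdT (φ : G →* Perm (Fin n)) (h : ∀ g x, x ∈ O ↔ φ g x ∈ O) : G →* Perm (Fin O.card) :=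
  (permCongrMul O.equivFin).toMonoidHom.comp (restrictHom (fun x => x ∈ O) φ h)

noncomputable def fwdS (φ : G →* Perm (Fin n)) (h : ∀ g x, x ∈ O ↔ φ g x ∈ O) :
    G →* Perm (Fin (n - O.card)) :=
  (permCongrMul (eC n O)).toMonoidHom.comp
    (restrictHom (fun x => ¬ x ∈ O) φ (fun g x => not_iff_not.mpr (h g x)))
end Fiber

section Fiber2
variable {G : Type*} [Group G] [TopologicalSpace G] (n : ℕ) (O : Finset (Fin n))

section RC2
variable {α : Type*} (p : α → Prop) [DecidablePred p]
lemma subtypeCongr_mul (ep ep' : Perm {x // p x}) (en en' : Perm {x // ¬ p x}) :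
    (ep * ep').subtypeCongr (en * en') = ep.subtypeCongr en * ep'.subtypeCongr en' := by
  ext a
  by_cases h : p a
  · have h1 : p ((ep'.subtypeCongr en') a) := by
      rw [Perm.subtypeCongr.left_apply _ _ h]; exact (ep' ⟨a, h⟩).2
    simp [Perm.mul_apply, Perm.subtypeCongr.left_apply _ _ h,
      Perm.subtypeCongr.left_apply _ _ h1, Perm.subtypeCongr.left_apply_subtype]
  · have h1 : ¬ p ((ep'.subtypeCongr en') a) := by
      rw [Perm.subtypeCongr.right_apply _ _ h]; exact (en' ⟨a, h⟩).2
    simp [Perm.mul_apply, Perm.subtypeCongr.right_apply _ _ h,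
      Perm.subtypeCongr.right_apply _ _ h1, Perm.subtypeCongr.right_apply_subtype]

def combineHom (ψ : G →* Perm {x // p x}) (χ : G →* Perm {x // ¬ p x}) : G →* Perm α where
  toFun g := (ψ g).subtypeCongr (χ g)
  map_one' := by
    ext a
    by_cases h : p a
    · simp [Perm.subtypeCongr.left_apply _ _ h]
    · simp [Perm.subtypeCongr.right_apply _ _ h]
  map_mul' a b := by simp [subtypeCongr_mul]

lemma combineHom_left (ψ : G →* Perm {x // p x}) (χ : G →* Perm {x // ¬ p x}) (g : G)
    {a : α} (h : p a) : combineHom p ψ χ g a = ψ g ⟨a, h⟩ :=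
  Perm.subtypeCongr.left_apply _ _ h

lemma combineHom_right (ψ : G →* Perm {x // p x}) (χ : G →* Perm {x // ¬ p x}) (g : G)
    {a : α} (h : ¬ p a) : combineHom p ψ χ g a = χ g ⟨a, h⟩ :=
  Perm.subtypeCongr.right_apply _ _ h

lemma combineHom_invariant (ψ : G →* Perm {x // p x}) (χ : G →* Perm {x // ¬ p x}) (g : G)
    (x : α) : p x ↔ p (combineHom p ψ χ g x) := by
  by_cases h : p x
  · simp [h, combineHom_left p ψ χ g h, (ψ g ⟨x, h⟩).2]
  · simp [h, combineHom_right p ψ χ g h, (χ g ⟨x, h⟩).2]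
end RC2

noncomputable def backC (ψ : G →* Perm (Fin O.card)) (χ : G →* Perm (Fin (n - O.card))) :
    G →* Perm (Fin n) :=
  combineHom (fun x => x ∈ O)
    ((permCongrMul O.equivFin).symm.toMonoidHom.comp ψ)
    ((permCongrMul (eC n O)).symm.toMonoidHom.comp χ)

lemma back_fwd (φ : G →* Perm (Fin n)) (h : ∀ g x, x ∈ O ↔ φ g x ∈ O) :
    backC n O (fwdT n O φ h) (fwdS n O φ h) = φ := by
  ext g x : 3
  by_cases hx : x ∈ O
  · rw [backC, combineHom_left _ _ _ _ hx]
    simp [fwdT, permCongrMul_symm_apply, permCongrMul_apply]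
  · rw [backC, combineHom_right _ _ _ _ hx]
    simp [fwdS, permCongrMul_symm_apply, permCongrMul_apply]

lemma fwdT_back (ψ : G →* Perm (Fin O.card)) (χ : G →* Perm (Fin (n - O.card)))
    (h : ∀ g x, x ∈ O ↔ backC n O ψ χ g x ∈ O) :
    fwdT n O (backC n O ψ χ) h = ψ := by
  ext g a
  have hmem : ((O.equivFin.symm a : {x : Fin n // x ∈ O}) : Fin n) ∈ O :=
    (O.equivFin.symm a).2
  simp only [fwdT, MonoidHom.comp_apply, MulEquiv.coe_toMonoidHom, permCongrMul_apply]
  have : (restrictHom (fun x => x ∈ O) (backC n O ψ χ) h g) (O.equivFin.symm a)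
      = (permCongrMul O.equivFin).symm (ψ g) (O.equivFin.symm a) := by
    apply Subtype.ext
    rw [restrictHom_apply, backC, combineHom_left _ _ _ _ hmem]
    simp [permCongrMul_symm_apply]
  rw [this]
  simp [permCongrMul_symm_apply]

lemma fwdS_back (ψ : G →* Perm (Fin O.card)) (χ : G →* Perm (Fin (n - O.card)))
    (h : ∀ g x, x ∈ O ↔ backC n O ψ χ g x ∈ O) :
    fwdS n O (backC n O ψ χ) h = χ := by
  ext g a
  have hmem : ¬ (((eC n O).symm a : {x : Fin n // ¬ x ∈ O}) : Fin n) ∈ O :=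
    ((eC n O).symm a).2
  simp only [fwdS, MonoidHom.comp_apply, MulEquiv.coe_toMonoidHom, permCongrMul_apply]
  have : (restrictHom (fun x => ¬ x ∈ O) (backC n O ψ χ)
        (fun g x => not_iff_not.mpr (h g x)) g) ((eC n O).symm a)
      = (permCongrMul (eC n O)).symm (χ g) ((eC n O).symm a) := by
    apply Subtype.ext
    rw [restrictHom_apply, backC, combineHom_right _ _ _ _ hmem]
    simp [permCongrMul_symm_apply]
  rw [this]
  simp [permCongrMul_symm_apply]
end Fiber2

section Fiber3
variable {G : Type*} [Group G] [TopologicalSpace G] (n : ℕ) (O : Finset (Fin n))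

lemma orb_invariant [NeZero n] (φ : G →* Perm (Fin n))
    (horb : ∀ b, (∃ g, φ g 0 = b) ↔ b ∈ O) : ∀ g x, x ∈ O ↔ φ g x ∈ O := by
  intro g x
  constructor
  · intro hx
    obtain ⟨h, hh⟩ := (horb x).2 hx
    exact (horb _).1 ⟨g * h, by simp [Perm.mul_apply, hh]⟩
  · intro hx
    obtain ⟨h, hh⟩ := (horb _).2 hx
    refine (horb x).1 ⟨g⁻¹ * h, ?_⟩
    simp only [map_mul, Perm.mul_apply, hh, map_inv]
    exact (φ g).symm_apply_apply _

lemma fwdT_transitive [NeZero n] (h0 : (0 : Fin n) ∈ O) (φ : G →* Perm (Fin n))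
    (horb : ∀ b, (∃ g, φ g 0 = b) ↔ b ∈ O) (h : ∀ g x, x ∈ O ↔ φ g x ∈ O) :
    ∀ a b : Fin O.card, ∃ g, fwdT n O φ h g a = b := by
  intro a b
  obtain ⟨g1, hg1⟩ := (horb _).2 (O.equivFin.symm a).2
  obtain ⟨g2, hg2⟩ := (horb _).2 (O.equivFin.symm b).2
  refine ⟨g2 * g1⁻¹, ?_⟩
  have hval : φ (g2 * g1⁻¹) (O.equivFin.symm a : Fin n) = (O.equivFin.symm b : Fin n) := by
    rw [← hg1, ← hg2]
    simp only [map_mul, Perm.mul_apply, map_inv]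
    rw [Perm.inv_def, Equiv.symm_apply_apply]
  simp only [fwdT, MonoidHom.comp_apply, MulEquiv.coe_toMonoidHom, permCongrMul_apply]
  rw [show (restrictHom (fun x => x ∈ O) φ h (g2 * g1⁻¹)) (O.equivFin.symm a)
      = O.equivFin.symm b from Subtype.ext (by rw [restrictHom_apply]; exact hval)]
  simp

lemma back_orbit [NeZero n] (h0 : (0 : Fin n) ∈ O) (ψ : G →* Perm (Fin O.card))
    (χ : G →* Perm (Fin (n - O.card))) (htr : ∀ a b : Fin O.card, ∃ g, ψ g a = b) :
    ∀ b, (∃ g, backC n O ψ χ g 0 = b) ↔ b ∈ O := by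
  intro b
  constructor
  · rintro ⟨g, rfl⟩
    exact (combineHom_invariant _ _ _ g 0).1 h0
  · intro hb
    obtain ⟨g, hg⟩ := htr (O.equivFin ⟨0, h0⟩) (O.equivFin ⟨b, hb⟩)
    refine ⟨g, ?_⟩
    rw [backC, combineHom_left _ _ _ _ h0]
    simp only [MonoidHom.comp_apply, MulEquiv.coe_toMonoidHom, permCongrMul_symm_apply]
    rw [hg]
    simp

lemma cont_fwdT (φ : G →* Perm (Fin n)) (h : ∀ g x, x ∈ O ↔ φ g x ∈ O)
    (hc : @Continuous G (Perm (Fin n)) _ ⊥ ⇑φ) :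
    @Continuous G (Perm (Fin O.card)) _ ⊥ ⇑(fwdT n O φ h) := by
  classical
  let F : Perm (Fin n) → Perm (Fin O.card) := fun π =>
    if hπ : ∀ x, x ∈ O ↔ π x ∈ O then permCongrMul O.equivFin (π.subtypePerm (fun x => (hπ x).symm)) else 1
  have : ⇑(fwdT n O φ h) = fun g => F (φ g) := by
    funext g
    simp only [F, dif_pos (h g)]
    rfl
  rw [this]
  exact @Continuous.comp G (Perm (Fin n)) (Perm (Fin O.card)) _ ⊥ ⊥ ⇑φ F continuous_bot hc

lemma cont_fwdS (φ : G →* Perm (Fin n)) (h : ∀ g x, x ∈ O ↔ φ g x ∈ O)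
    (hc : @Continuous G (Perm (Fin n)) _ ⊥ ⇑φ) :
    @Continuous G (Perm (Fin (n - O.card))) _ ⊥ ⇑(fwdS n O φ h) := by
  classical
  let F : Perm (Fin n) → Perm (Fin (n - O.card)) := fun π =>
    if hπ : ∀ x, ¬ x ∈ O ↔ ¬ π x ∈ O then permCongrMul (eC n O) (π.subtypePerm (fun x => (hπ x).symm)) else 1
  have : ⇑(fwdS n O φ h) = fun g => F (φ g) := by
    funext g
    simp only [F, dif_pos (fun x => not_iff_not.mpr (h g x))]
    rfl
  rw [this]
  exact @Continuous.comp G (Perm (Fin n)) (Perm (Fin (n - O.card))) _ ⊥ ⊥ ⇑φ F continuous_bot hc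

set_option maxHeartbeats 1000000 in
lemma cont_backC (ψ : G →* Perm (Fin O.card)) (χ : G →* Perm (Fin (n - O.card)))
    (hψ : @Continuous G (Perm (Fin O.card)) _ ⊥ ⇑ψ)
    (hχ : @Continuous G (Perm (Fin (n - O.card))) _ ⊥ ⇑χ) :
    @Continuous G (Perm (Fin n)) _ ⊥ ⇑(backC n O ψ χ) := by
  classical
  let F : Perm (Fin O.card) → Perm (Fin (n - O.card)) → Perm (Fin n) := fun a b =>
    Perm.subtypeCongr ((permCongrMul O.equivFin).symm a) ((permCongrMul (eC n O)).symm b)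
  have heq : ⇑(backC n O ψ χ) = fun g => F (ψ g) (χ g) := by
    funext g
    rfl
  rw [heq]
  letI : TopologicalSpace (Perm (Fin O.card)) := ⊥
  letI : TopologicalSpace (Perm (Fin (n - O.card))) := ⊥
  letI : TopologicalSpace (Perm (Fin n)) := ⊥
  haveI : DiscreteTopology (Perm (Fin O.card)) := ⟨rfl⟩
  haveI : DiscreteTopology (Perm (Fin (n - O.card))) := ⟨rfl⟩
  have h1 : Continuous fun g => (ψ g, χ g) := hψ.prodMk hχ
  exact Continuous.comp (g := fun p : Perm (Fin O.card) × Perm (Fin (n - O.card)) => F p.1 p.2) (f := fun g => (ψ g, χ g)) continuous_of_discreteTopology h1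
end Fiber3

section FiberEq
variable {G : Type*} [Group G] [TopologicalSpace G] (n : ℕ) (O : Finset (Fin n))

noncomputable def fiberEquiv [NeZero n] (h0 : (0 : Fin n) ∈ O) :
    {φ : G →* Perm (Fin n) //
        @Continuous G (Perm (Fin n)) _ ⊥ ⇑φ ∧ ∀ b, (∃ g, φ g 0 = b) ↔ b ∈ O} ≃
      {ψ : G →* Perm (Fin O.card) //
          @Continuous G (Perm (Fin O.card)) _ ⊥ ⇑ψ ∧ ∀ a b, ∃ g, ψ g a = b} ×
        {χ : G →* Perm (Fin (n - O.card)) //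
          @Continuous G (Perm (Fin (n - O.card))) _ ⊥ ⇑χ} where
  toFun φ :=
    (⟨fwdT n O φ.1 (orb_invariant n O φ.1 φ.2.2),
        cont_fwdT n O φ.1 _ φ.2.1,
        fwdT_transitive n O h0 φ.1 φ.2.2 _⟩,
     ⟨fwdS n O φ.1 (orb_invariant n O φ.1 φ.2.2),
        cont_fwdS n O φ.1 _ φ.2.1⟩)
  invFun p :=
    ⟨backC n O p.1.1 p.2.1,
      cont_backC n O p.1.1 p.2.1 p.1.2.1 p.2.2,
      back_orbit n O h0 p.1.1 p.2.1 p.1.2.2⟩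
  left_inv φ := Subtype.ext (back_fwd n O φ.1 _)
  right_inv p := by
    refine Prod.ext ?_ ?_
    · exact Subtype.ext (fwdT_back n O p.1.1 p.2.1
        (orb_invariant n O _ (back_orbit n O h0 p.1.1 p.2.1 p.1.2.2)))
    · exact Subtype.ext (fwdS_back n O p.1.1 p.2.1
        (orb_invariant n O _ (back_orbit n O h0 p.1.1 p.2.1 p.1.2.2)))

lemma fiber_card [NeZero n] (h0 : (0 : Fin n) ∈ O)
    (h1 : Finite {ψ : G →* Perm (Fin O.card) //
        @Continuous G (Perm (Fin O.card)) _ ⊥ ⇑ψ ∧ ∀ a b, ∃ g, ψ g a = b})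
    (h2 : Finite {χ : G →* Perm (Fin (n - O.card)) //
        @Continuous G (Perm (Fin (n - O.card))) _ ⊥ ⇑χ}) :
    Nat.card {φ : G →* Perm (Fin n) //
        @Continuous G (Perm (Fin n)) _ ⊥ ⇑φ ∧ ∀ b, (∃ g, φ g 0 = b) ↔ b ∈ O}
      = transContHomCount G O.card * contHomCount G (n - O.card) := by
  rw [Nat.card_congr (fiberEquiv n O h0), Nat.card_prod]
  rfl
end FiberEq

lemma nat_card_sigma {ι : Type*} [Fintype ι] (f : ι → Type*) [∀ i, Finite (f i)] :
    Nat.card (Sigma f) = ∑ i, Nat.card (f i) := by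
  letI : ∀ i, Fintype (f i) := fun i => Fintype.ofFinite _
  simp [Nat.card_eq_fintype_card]

lemma count_sets (n k : ℕ) [NeZero n] (hk : 1 ≤ k) :
    (Finset.univ.filter (fun O : Finset (Fin n) => (0 : Fin n) ∈ O ∧ O.card = k)).card
      = (n - 1).choose (k - 1) := by
  classical
  rw [show (n - 1).choose (k - 1)
      = ((Finset.univ.erase (0 : Fin n)).powersetCard (k - 1)).card by
    rw [Finset.card_powersetCard, Finset.card_erase_of_mem (Finset.mem_univ _),
      Finset.card_univ, Fintype.card_fin]]
  refine Finset.card_bij' (fun O _ => O.erase 0) (fun s _ => insert 0 s) ?_ ?_ ?_ ?_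
  · intro O hO
    simp only [Finset.mem_filter, Finset.mem_univ, true_and] at hO
    rw [Finset.mem_powersetCard]
    exact ⟨Finset.erase_subset_erase _ (Finset.subset_univ _),
      by rw [Finset.card_erase_of_mem hO.1, hO.2]⟩
  · intro s hs
    rw [Finset.mem_powersetCard] at hs
    have h0s : (0 : Fin n) ∉ s := fun h => (Finset.mem_erase.mp (hs.1 h)).1 rfl
    simp only [Finset.mem_filter, Finset.mem_univ, true_and]
    refine ⟨Finset.mem_insert_self _ _, ?_⟩
    rw [Finset.card_insert_of_notMem h0s, hs.2]
    omega
  · intro O hO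
    simp only [Finset.mem_filter, Finset.mem_univ, true_and] at hO
    exact Finset.insert_erase hO.1
  · intro s hs
    rw [Finset.mem_powersetCard] at hs
    have h0s : (0 : Fin n) ∉ s := fun h => (Finset.mem_erase.mp (hs.1 h)).1 rfl
    exact Finset.erase_insert h0s

/-- `t_n = ∑_{k=1}^{n} C(n-1, k-1) · s_k · t_{n-k}` for every positive
integer `n`, where `t_m` is the number of continuous homomorphisms `G → S_m`
(with `t_0 = 1`) and `s_k` the number of those with transitive image. -/
theorem contHomCount_recurrence (G : Type*) [Group G] [TopologicalSpace G]
    [IsTopologicalGroup G]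
    (hfin_t : ∀ n : ℕ,
      Finite {φ : G →* Equiv.Perm (Fin n) // @Continuous G (Equiv.Perm (Fin n)) _ ⊥ ⇑φ})
    (hfin_s : ∀ n : ℕ, Finite {φ : G →* Equiv.Perm (Fin n) //
      @Continuous G (Equiv.Perm (Fin n)) _ ⊥ ⇑φ ∧ ∀ a b : Fin n, ∃ g : G, φ g a = b})
    (n : ℕ) (hn : 0 < n) :
    contHomCount G n =
      ∑ k ∈ Finset.Icc 1 n,
        (n - 1).choose (k - 1) * transContHomCount G k * contHomCount G (n - k) := by
  classical
  haveI : NeZero n := ⟨hn.ne'⟩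
  haveI hT : Finite {φ : G →* Perm (Fin n) // @Continuous G (Perm (Fin n)) _ ⊥ ⇑φ} := hfin_t n
  let f : {φ : G →* Perm (Fin n) // @Continuous G (Perm (Fin n)) _ ⊥ ⇑φ} → Finset (Fin n) :=
    fun φ => Finset.univ.filter (fun b => ∃ g, φ.1 g 0 = b)
  let c : Finset (Fin n) → ℕ := fun O =>
    Nat.card {φ : G →* Perm (Fin n) //
      @Continuous G (Perm (Fin n)) _ ⊥ ⇑φ ∧ ∀ b, (∃ g, φ g 0 = b) ↔ b ∈ O}
  have h1 : contHomCount G n = ∑ O : Finset (Fin n), c O := by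
    rw [contHomCount, ← Nat.card_congr (Equiv.sigmaFiberEquiv f), nat_card_sigma]
    refine Finset.sum_congr rfl fun O _ => ?_
    apply Nat.card_congr
    refine Equiv.trans (Equiv.subtypeSubtypeEquivSubtypeInter
      (fun φ : G →* Perm (Fin n) => @Continuous G (Perm (Fin n)) _ ⊥ ⇑φ)
      (fun φ => Finset.univ.filter (fun b => ∃ g, φ g 0 = b) = O))
      (Equiv.subtypeEquivRight ?_)
    intro φ
    refine and_congr_right fun _ => ?_
    rw [Finset.ext_iff]
    simp [f]
  have hc0 : ∀ O : Finset (Fin n), (0 : Fin n) ∉ O → c O = 0 := by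
    intro O h0
    have : IsEmpty {φ : G →* Perm (Fin n) //
        @Continuous G (Perm (Fin n)) _ ⊥ ⇑φ ∧ ∀ b, (∃ g, φ g 0 = b) ↔ b ∈ O} :=
      ⟨fun φ => h0 ((φ.2.2 0).1 ⟨1, by simp⟩)⟩
    exact Nat.card_of_isEmpty
  have hval : ∀ O : Finset (Fin n), (0 : Fin n) ∈ O →
      c O = transContHomCount G O.card * contHomCount G (n - O.card) := fun O h0 =>
    fiber_card n O h0 (hfin_s O.card) (hfin_t (n - O.card))
  rw [h1]
  rw [← Finset.sum_filter_of_ne (p := fun O : Finset (Fin n) => (0 : Fin n) ∈ O)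
    (fun O _ hne => by by_contra h; exact hne (hc0 O h))]
  rw [← Finset.sum_fiberwise_of_maps_to (g := Finset.card) (t := Finset.Icc 1 n)
    (fun O hO => by
      simp only [Finset.mem_filter, Finset.mem_univ, true_and] at hO
      rw [Finset.mem_Icc]
      exact ⟨Finset.card_pos.mpr ⟨0, hO⟩, le_trans (Finset.card_le_univ O) (by simp)⟩) c]
  refine Finset.sum_congr rfl fun k hk => ?_
  rw [Finset.mem_Icc] at hk
  rw [Finset.filter_filter]
  have hconst : ∀ O ∈ Finset.univ.filter
      (fun O : Finset (Fin n) => (0 : Fin n) ∈ O ∧ O.card = k),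
      c O = transContHomCount G k * contHomCount G (n - k) := by
    intro O hO
    simp only [Finset.mem_filter, Finset.mem_univ, true_and] at hO
    rw [hval O hO.1, hO.2]
  rw [Finset.sum_congr rfl hconst, Finset.sum_const, smul_eq_mul, count_sets n k hk.1,
    mul_assoc]
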